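/- arXiv:1311.1240 — 3 statements merged into one kernel-verified Lean document; each statement's English description precedes it below -/
import Mathlib

section
/- Let κ be a clique of the G-IDNC graph G(H) and let (i,j) ∈ κ. Then the set of packets of κ that receiver i lacks is exactly {j}; that is, j ∈ P(κ), j ∉ H i, and every packet l ∈ P(κ) with l ≠ j satisfies l ∈ H i. -/
/-- The G-IDNC graph for feedback configuration `H`: vertices are pairs `(i, j)`
with packet `j` not in the Has set of receiver `i`; distinct vertices `(i,j)` and
`(k,l)` are adjacent iff (C1) `j = l`, or (C2) `j ∈ H k` and `l ∈ H i`. -/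
def GIDNC {M N : Type*} (H : M → Set N) :
    SimpleGraph {v : M × N // v.2 ∉ H v.1} where
  Adj u v := u ≠ v ∧ (u.1.2 = v.1.2 ∨ (u.1.2 ∈ H v.1.1 ∧ v.1.2 ∈ H u.1.1))
  symm := ⟨by
    rintro u v ⟨hne, h | ⟨h1, h2⟩⟩
    · exact ⟨hne.symm, Or.inl h.symm⟩
    · exact ⟨hne.symm, Or.inr ⟨h2, h1⟩⟩⟩
  loopless := ⟨fun u h => h.1 rfl⟩

/-- The S-IDNC graph for feedback configuration `H`: same vertex set as the G-IDNC
graph; distinct vertices `(i,j)` and `(k,l)` are adjacent iff `j = l`, or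
(`j ∈ H k` and `l ∈ H i` and no receiver `m` lacks both `j` and `l`). -/
def SIDNC {M N : Type*} (H : M → Set N) :
    SimpleGraph {v : M × N // v.2 ∉ H v.1} where
  Adj u v := u ≠ v ∧ (u.1.2 = v.1.2 ∨
    (u.1.2 ∈ H v.1.1 ∧ v.1.2 ∈ H u.1.1 ∧ ¬∃ m, u.1.2 ∉ H m ∧ v.1.2 ∉ H m))
  symm := ⟨by
    rintro u v ⟨hne, h | ⟨h1, h2, h3⟩⟩
    · exact ⟨hne.symm, Or.inl h.symm⟩
    · exact ⟨hne.symm, Or.inr ⟨h2, h1, fun ⟨m, hm1, hm2⟩ => h3 ⟨m, hm2, hm1⟩⟩⟩⟩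
  loopless := ⟨fun u h => h.1 rfl⟩

/-- The packet set of a set of vertices `κ`: all packets `j` such that some vertex
`(i, j)` belongs to `κ`. -/
def packetSet {M N : Type*} (H : M → Set N)
    (κ : Set {v : M × N // v.2 ∉ H v.1}) : Set N :=
  {j : N | ∃ u ∈ κ, u.1.2 = j}

/-- Let `κ` be a clique of the G-IDNC graph and `(i,j) ∈ κ`.  Then the
set of packets of `κ` that receiver `i` lacks is exactly `{j}`: `j ∈ P(κ)`,
`j ∉ H i`, and every packet `l ∈ P(κ)` with `l ≠ j` satisfies `l ∈ H i`. -/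
theorem gidnc_clique_lacked_packets {M N : Type*} (H : M → Set N)
    (κ : Set {v : M × N // v.2 ∉ H v.1}) (hκ : (GIDNC H).IsClique κ)
    (i : M) (j : N) (hij : j ∉ H i) (hmem : (⟨(i, j), hij⟩ : {v : M × N // v.2 ∉ H v.1}) ∈ κ) :
    j ∈ packetSet H κ ∧ j ∉ H i ∧ ∀ l ∈ packetSet H κ, l ≠ j → l ∈ H i := by
  refine ⟨⟨_, hmem, rfl⟩, hij, ?_⟩
  rintro l ⟨u, hu, rfl⟩ hne
  have hadj := hκ hmem hu (fun h => hne (congrArg (fun v => v.1.2) h.symm))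
  rcases hadj.2 with h | ⟨_, h2⟩
  · exact absurd h.symm hne
  · exact h2
end

section
/- Instant decodability of G-IDNC cliques: let V₂ be a module over ZMod 2 (packet contents), x : N → V₂ the source packets, κ a clique of the G-IDNC graph G(H) with finite packet set P(κ), and (i,j) ∈ κ. Then receiver i recovers its missing packet from the XOR of the clique's packets and its Has set: x j = (Σ_{l ∈ P(κ)} x l) + Σ_{l ∈ P(κ), l ∈ H i} x l. -/
open scoped Classical in
/-- Instant decodability of G-IDNC cliques.  If `V₂` is a module over
`ZMod 2` (so `+` is XOR), `x : N → V₂` are the source packets, `κ` is a (finite)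
clique of the G-IDNC graph with packet set `P = κ.image (fun v => v.1.2)`, and
`(i, j) ∈ κ`, then receiver `i` recovers its missing packet from the XOR of the
clique's packets and the packets of `P` it already has:
`x j = (∑ l ∈ P, x l) + ∑ l ∈ P with l ∈ H i, x l`. -/
theorem gidnc_clique_instantly_decodable {M N : Type*} [DecidableEq N]
    (H : M → Set N) (V₂ : Type*) [AddCommGroup V₂] [Module (ZMod 2) V₂]
    (x : N → V₂) (κ : Finset {v : M × N // v.2 ∉ H v.1})
    (hκ : (GIDNC H).IsClique ↑κ)
    (i : M) (j : N) (hij : j ∉ H i)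
    (hmem : (⟨(i, j), hij⟩ : {v : M × N // v.2 ∉ H v.1}) ∈ κ) :
    x j = (∑ l ∈ κ.image (fun v => v.1.2), x l) +
      ∑ l ∈ (κ.image (fun v => v.1.2)).filter (fun l => l ∈ H i), x l := by
  set P := κ.image (fun v => v.1.2) with hP
  have hjP : j ∈ P := Finset.mem_image_of_mem _ hmem
  have hfilter : P.filter (fun l => l ∈ H i) = P.erase j := by
    ext l
    simp only [Finset.mem_filter, Finset.mem_erase]
    constructor
    · rintro ⟨hl, hli⟩
      exact ⟨fun h => hij (h ▸ hli), hl⟩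
    · rintro ⟨hne, hl⟩
      refine ⟨hl, ?_⟩
      obtain ⟨v, hv, rfl⟩ := Finset.mem_image.mp hl
      have hvne : v ≠ ⟨(i, j), hij⟩ := by
        rintro rfl; exact hne rfl
      have hadj : v ≠ ⟨(i, j), hij⟩ ∧ (v.1.2 = j ∨ (v.1.2 ∈ H i ∧ j ∈ H v.1.1)) := hκ hv hmem hvne
      rcases hadj.2 with h | ⟨h1, _⟩
      · exact absurd h hne
      · exact h1
  have hsum : ∑ l ∈ P, x l = x j + ∑ l ∈ P.erase j, x l :=
    (Finset.add_sum_erase P x hjP).symm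
  have hself : ∀ v : V₂, v + v = 0 := by
    intro v
    have h2 : (2 : ZMod 2) • v = v + v := two_smul _ v
    rw [show (2 : ZMod 2) = 0 by decide, zero_smul] at h2
    exact h2.symm
  rw [hfilter, hsum, add_assoc, hself, add_zero]
end

section
/- Universal instant decodability of S-IDNC cliques: let V₂ be a module over ZMod 2, x : N → V₂ the source packets, and κ a clique of the S-IDNC graph G_s(H) with finite packet set P(κ). Then for every receiver m ∈ M such that some packet of P(κ) is lacked by m, there is exactly one such packet j, and m recovers it as x j = (Σ_{l ∈ P(κ)} x l) + Σ_{l ∈ P(κ), l ∈ H m} x l. -/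
open scoped Classical in
/-- Universal instant decodability of S-IDNC cliques.  If `V₂` is a
module over `ZMod 2` (so `+` is XOR), `x : N → V₂` are the source packets, and `κ`
is a (finite) clique of the S-IDNC graph with packet set
`P = κ.image (fun v => v.1.2)`, then every receiver `m` lacking some packet of `P`
lacks exactly one such packet `j`, and recovers it as
`x j = (∑ l ∈ P, x l) + ∑ l ∈ P with l ∈ H m, x l`. -/
theorem sidnc_clique_universally_decodable {M N : Type*} [DecidableEq N]
    (H : M → Set N) (V₂ : Type*) [AddCommGroup V₂] [Module (ZMod 2) V₂]
    (x : N → V₂) (κ : Finset {v : M × N // v.2 ∉ H v.1})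
    (hκ : (SIDNC H).IsClique ↑κ) (m : M)
    (hm : ∃ j ∈ κ.image (fun v => v.1.2), j ∉ H m) :
    (∃! j, j ∈ κ.image (fun v => v.1.2) ∧ j ∉ H m) ∧
    ∀ j ∈ κ.image (fun v => v.1.2), j ∉ H m →
      x j = (∑ l ∈ κ.image (fun v => v.1.2), x l) +
        ∑ l ∈ (κ.image (fun v => v.1.2)).filter (fun l => l ∈ H m), x l := by
  set P := κ.image (fun v => v.1.2) with hP
  -- uniqueness
  have huniq : ∀ j₁ ∈ P, j₁ ∉ H m → ∀ j₂ ∈ P, j₂ ∉ H m → j₁ = j₂ := by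
    intro j₁ hj₁ hj₁m j₂ hj₂ hj₂m
    obtain ⟨u, hu, rfl⟩ := Finset.mem_image.mp hj₁
    obtain ⟨v, hv, rfl⟩ := Finset.mem_image.mp hj₂
    by_cases huv : u = v
    · rw [huv]
    · have hadj := hκ (Finset.mem_coe.mpr hu) (Finset.mem_coe.mpr hv) huv
      rcases (show u ≠ v ∧ _ from hadj).2 with h | ⟨_, _, h3⟩
      · exact h
      · exact absurd ⟨m, hj₁m, hj₂m⟩ h3
  obtain ⟨j₀, hj₀P, hj₀m⟩ := hm
  refine ⟨⟨j₀, ⟨hj₀P, hj₀m⟩, fun y hy => huniq y hy.1 hy.2 j₀ hj₀P hj₀m⟩, ?_⟩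
  intro j hjP hjm
  have hsplit := Finset.sum_filter_add_sum_filter_not P (fun l => l ∈ H m) x
  have hfilt : P.filter (fun l => l ∉ H m) = {j} := by
    apply Finset.eq_singleton_iff_unique_mem.mpr
    refine ⟨Finset.mem_filter.mpr ⟨hjP, hjm⟩, fun y hy => ?_⟩
    have := Finset.mem_filter.mp hy
    exact huniq y this.1 this.2 j hjP hjm
  have hsum : (∑ l ∈ P, x l) =
      (∑ l ∈ P.filter (fun l => l ∈ H m), x l) + x j := by
    rw [← hsplit, hfilt, Finset.sum_singleton]
  rw [hsum]
  have hchar : ∀ v : V₂, v + v = 0 := by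
    intro v
    have h2 : (2 : ZMod 2) • v = v + v := two_smul _ v
    have : (2 : ZMod 2) = 0 := by decide
    rw [this, zero_smul] at h2
    exact h2.symm
  abel_nf
  rw [two_zsmul, hchar, zero_add]
end
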